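/- Let H be a commutative Hopf algebra with bijective antipode over a commutative ring k (faithfully flat over k), and let M, N, P be left-right Yetter-Drinfeld modules over H with N finitely generated and projective as a left H-module. Then there is a k-linear isomorphism Hom_H^H(M, Hom_H(N, P)) ≅ Hom_H^H(M ⊗_H N, P), where Hom_H^H denotes the space of H-linear H-colinear maps. -/
import Mathlib


/-!
Common definitions for formalizing "Semisimplicity of the categories of
Yetter-Drinfeld modules and Long dimodules" (Caenepeel, Guédénon).
-/

open TensorProduct

noncomputable section
namespace YDPaper

section RingPart

variable (k H : Type) [CommRing k] [Ring H] [HopfAlgebra k H]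

/-- `ρ : M →ₗ[k] M ⊗[k] H` is a (coassociative, counital) right `H`-comodule
structure on `M`. -/
def IsComod {M : Type} [AddCommGroup M] [Module k M] (ρ : M →ₗ[k] M ⊗[k] H) : Prop :=
  (∀ m : M, (TensorProduct.rid k M)
      ((LinearMap.lTensor M (Coalgebra.counit (R := k) (A := H))) (ρ m)) = m) ∧
  (∀ m : M, (TensorProduct.assoc k M H H) ((LinearMap.rTensor H ρ) (ρ m)) =
      (LinearMap.lTensor M (Coalgebra.comul (R := k) (A := H))) (ρ m))

/-- The iterated comultiplication `h ↦ (h₁ ⊗ h₂) ⊗ h₃`. -/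
def Delta2 : H →ₗ[k] (H ⊗[k] H) ⊗[k] H :=
  (LinearMap.rTensor H (Coalgebra.comul (R := k) (A := H))).comp
    (Coalgebra.comul (R := k) (A := H))

/-- The Yetter-Drinfeld compatibility condition
`ρ(h • m) = h₂ • m₀ ⊗ h₃ m₁ S⁻¹(h₁)`, expressed via arbitrary Sweedler
decompositions of `Δ²(h)` and `ρ(m)` into finite sums of pure tensors. -/
def IsYDCompat (Sinv : H →ₗ[k] H) {M : Type} [AddCommGroup M] [Module k M] [Module H M]
    (ρ : M →ₗ[k] M ⊗[k] H) : Prop :=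
  ∀ (h : H) (m : M) (s t : Finset ℕ) (a b c : ℕ → H) (m₀ : ℕ → M) (m₁ : ℕ → H),
    (∑ i ∈ s, (a i ⊗ₜ[k] b i) ⊗ₜ[k] c i) = Delta2 k H h →
    (∑ j ∈ t, m₀ j ⊗ₜ[k] m₁ j) = ρ m →
    ρ (h • m) = ∑ i ∈ s, ∑ j ∈ t, (b i • m₀ j) ⊗ₜ[k] (c i * m₁ j * Sinv (a i))

/-- The `k`-linear map `m ↦ h • m`. -/
def smulMap {M : Type} [AddCommGroup M] [Module k M] [Module H M] [SMulCommClass H k M]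
    (h : H) : M →ₗ[k] M where
  toFun m := h • m
  map_add' := smul_add h
  map_smul' c m := (smul_comm h c m)

/-- The Long dimodule compatibility condition `ρ(h • m) = h • m₀ ⊗ m₁`. -/
def IsLongCompat {M : Type} [AddCommGroup M] [Module k M] [Module H M] [SMulCommClass H k M]
    (ρ : M →ₗ[k] M ⊗[k] H) : Prop :=
  ∀ (h : H) (m : M), ρ (h • m) = (LinearMap.rTensor H (smulMap k H h)) (ρ m)

/-- Morphisms in the categories of Yetter-Drinfeld modules and of Long dimodules:
`H`-linear and `H`-colinear maps. -/
def IsHom {A B : Type} [AddCommGroup A] [Module k A] [Module H A]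
    [AddCommGroup B] [Module k B] [Module H B]
    (ρA : A →ₗ[k] A ⊗[k] H) (ρB : B →ₗ[k] B ⊗[k] H) (f : A →ₗ[k] B) : Prop :=
  (∀ (h : H) (a : A), f (h • a) = h • f a) ∧
  ρB.comp f = (LinearMap.rTensor H f).comp ρA

/-- `H`-colinearity of a `k`-linear map between right `H`-comodules. -/
def IsColin {A B : Type} [AddCommGroup A] [Module k A]
    [AddCommGroup B] [Module k B]
    (ρA : A →ₗ[k] A ⊗[k] H) (ρB : B →ₗ[k] B ⊗[k] H) (f : A →ₗ[k] B) : Prop :=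
  ρB.comp f = (LinearMap.rTensor H f).comp ρA

/-- A bundled left-right Yetter-Drinfeld module over `H` (with chosen inverse `Sinv`
of the antipode). -/
structure YDCat (Sinv : H →ₗ[k] H) where
  M : Type
  [iAdd : AddCommGroup M]
  [iModk : Module k M]
  [iModH : Module H M]
  [iTower : IsScalarTower k H M]
  [iComm : SMulCommClass H k M]
  ρ : M →ₗ[k] M ⊗[k] H
  comod : IsComod k H ρ
  compat : IsYDCompat k H Sinv ρ

attribute [instance] YDCat.iAdd YDCat.iModk YDCat.iModH YDCat.iTower YDCat.iComm

/-- A bundled left-right Long dimodule over `H`. -/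
structure LongCat where
  M : Type
  [iAdd : AddCommGroup M]
  [iModk : Module k M]
  [iModH : Module H M]
  [iTower : IsScalarTower k H M]
  [iComm : SMulCommClass H k M]
  ρ : M →ₗ[k] M ⊗[k] H
  comod : IsComod k H ρ
  compat : IsLongCompat k H ρ

attribute [instance] LongCat.iAdd LongCat.iModk LongCat.iModH LongCat.iTower LongCat.iComm

/-- A bundled right `H`-comodule. -/
structure ComodCat where
  V : Type
  [iAdd : AddCommGroup V]
  [iModk : Module k V]
  ρ : V →ₗ[k] V ⊗[k] H
  comod : IsComod k H ρ

attribute [instance] ComodCat.iAdd ComodCat.iModk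

section Subobjects

variable {k H}
variable {M : Type} [AddCommGroup M] [Module k M] [Module H M] [IsScalarTower k H M]

/-- A subobject in the category of Yetter-Drinfeld modules (or Long dimodules):
an `H`-submodule which is stable under the coaction, i.e. `ρ(p) ⊆ p ⊗ H`. -/
def IsSubobject (ρ : M →ₗ[k] M ⊗[k] H) (p : Submodule H M) : Prop :=
  ∀ m ∈ p, ρ m ∈ LinearMap.range (LinearMap.rTensor H (p.restrictScalars k).subtype)

/-- A simple subobject: a nonzero coaction-stable `H`-submodule with no proper
nonzero coaction-stable `H`-submodules. -/
def IsSimpleSubobject (ρ : M →ₗ[k] M ⊗[k] H) (p : Submodule H M) : Prop :=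
  IsSubobject ρ p ∧ p ≠ ⊥ ∧
    ∀ q : Submodule H M, IsSubobject ρ q → q ≤ p → q = ⊥ ∨ q = p

/-- `M` is the (internal) direct sum of a family of simple subobjects which are
finitely generated as `H`-modules. -/
def IsSemisimpleObj (ρ : M →ₗ[k] M ⊗[k] H) : Prop :=
  ∃ (ι : Type) (S : ι → Submodule H M),
    (∀ i, IsSimpleSubobject ρ (S i) ∧ (S i).FG) ∧
    iSupIndep S ∧ (⨆ i, S i) = ⊤

end Subobjects

section Subcomodules

variable {k H}
variable {V : Type} [AddCommGroup V] [Module k V]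

/-- A subcomodule: a `k`-submodule stable under the coaction. -/
def IsSubcomod (ρ : V →ₗ[k] V ⊗[k] H) (p : Submodule k V) : Prop :=
  ∀ v ∈ p, ρ v ∈ LinearMap.range (LinearMap.rTensor H p.subtype)

/-- A simple subcomodule. -/
def IsSimpleSubcomod (ρ : V →ₗ[k] V ⊗[k] H) (p : Submodule k V) : Prop :=
  IsSubcomod ρ p ∧ p ≠ ⊥ ∧
    ∀ q : Submodule k V, IsSubcomod ρ q → q ≤ p → q = ⊥ ∨ q = p

/-- A comodule is semisimple if it is the internal direct sum of a family of simple
subcomodules. -/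
def IsSemisimpleComod (ρ : V →ₗ[k] V ⊗[k] H) : Prop :=
  ∃ (ι : Type) (S : ι → Submodule k V),
    (∀ i, IsSimpleSubcomod ρ (S i)) ∧ iSupIndep S ∧ (⨆ i, S i) = ⊤

end Subcomodules

/-- `H` is cosemisimple: every right `H`-comodule is a direct sum of simple
subcomodules. -/
def Cosemisimple : Prop := ∀ C : ComodCat k H, IsSemisimpleComod C.ρ

section Coinv

variable {k H}
variable {A B : Type} [AddCommGroup A] [Module k A] [AddCommGroup B] [Module k B]

/-- The coinvariants `M^{co H} = { m | ρ m = m ⊗ 1 }` of a right `H`-comodule. -/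
def coinv (ρ : A →ₗ[k] A ⊗[k] H) : Submodule k A :=
  LinearMap.ker (ρ - (TensorProduct.mk k A H).flip 1)

lemma mem_coinv {ρ : A →ₗ[k] A ⊗[k] H} {a : A} :
    a ∈ coinv ρ ↔ ρ a = a ⊗ₜ[k] (1 : H) := by
  simp [coinv, LinearMap.mem_ker, sub_eq_zero]

/-- The map induced on coinvariants by an `H`-colinear map. -/
def coinvMap {ρA : A →ₗ[k] A ⊗[k] H} {ρB : B →ₗ[k] B ⊗[k] H} (f : A →ₗ[k] B)
    (hf : IsColin k H ρA ρB f) : ↥(coinv ρA) →ₗ[k] ↥(coinv ρB) :=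
  f.restrict (fun a ha => by
    have h1 : ρA a = a ⊗ₜ[k] (1 : H) := mem_coinv.1 ha
    have h2 : ρB (f a) = (LinearMap.rTensor H f) (ρA a) := by
      have := congrArg (fun (g : A →ₗ[k] B ⊗[k] H) => g a) hf
      simpa using this
    rw [mem_coinv, h2, h1, LinearMap.rTensor_tmul])

end Coinv

/-- Exactness of the coinvariants functor on the category of Yetter-Drinfeld
modules. -/
def CoinvExactYD (Sinv : H →ₗ[k] H) : Prop :=
  ∀ (A B C : YDCat k H Sinv) (f : A.M →ₗ[k] B.M) (g : B.M →ₗ[k] C.M)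
    (hf : IsHom k H A.ρ B.ρ f) (hg : IsHom k H B.ρ C.ρ g),
    Function.Injective f → Function.Surjective g →
    LinearMap.range f = LinearMap.ker g →
    Function.Injective (coinvMap f hf.2) ∧
    LinearMap.range (coinvMap f hf.2) = LinearMap.ker (coinvMap g hg.2) ∧
    Function.Surjective (coinvMap g hg.2)

/-- Exactness of the coinvariants functor on the category of right `H`-comodules. -/
def CoinvExactComod : Prop :=
  ∀ (A B C : ComodCat k H) (f : A.V →ₗ[k] B.V) (g : B.V →ₗ[k] C.V)
    (hf : IsColin k H A.ρ B.ρ f) (hg : IsColin k H B.ρ C.ρ g),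
    Function.Injective f → Function.Surjective g →
    LinearMap.range f = LinearMap.ker g →
    Function.Injective (coinvMap f hf) ∧
    LinearMap.range (coinvMap f hf) = LinearMap.ker (coinvMap g hg) ∧
    Function.Surjective (coinvMap g hg)

section Eval

variable {k H}
variable {M N : Type} [AddCommGroup M] [Module k M] [Module H M]
  [IsScalarTower k H M] [SMulCommClass H k M]
  [AddCommGroup N] [Module k N] [Module H N] [IsScalarTower k H N] [SMulCommClass H k N]

/-- Evaluation at `m` of `H`-linear maps, as a `k`-linear map. -/
def evalAtH (m : M) : (M →ₗ[H] N) →ₗ[k] N where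
  toFun f := f m
  map_add' _ _ := rfl
  map_smul' _ _ := rfl

/-- Evaluation at `m` of `k`-linear maps, as a `k`-linear map. -/
def evalAtK {V : Type} [AddCommGroup V] [Module k V] (v : V) :
    (V →ₗ[k] N) →ₗ[k] N where
  toFun f := f v
  map_add' _ _ := rfl
  map_smul' _ _ := rfl

/-- Contraction `N ⊗ H → N` along a functional `φ : H → k`. -/
def contract (φ : H →ₗ[k] k) : N ⊗[k] H →ₗ[k] N :=
  (TensorProduct.rid k N).toLinearMap.comp (LinearMap.lTensor N φ)

/-- Post-composition with an `H`-linear map, as a `k`-linear map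
`Hom_H(X, M) → Hom_H(X, N)`; here `X` is the (implicit) source. -/
def postcompH {X : Type} [AddCommGroup X] [Module k X] [Module H X]
    [IsScalarTower k H X] [SMulCommClass H k X]
    (f : M →ₗ[k] N) (hf : ∀ (h : H) (m : M), f (h • m) = h • f m) :
    (X →ₗ[H] M) →ₗ[k] (X →ₗ[H] N) where
  toFun φ :=
    { toFun := fun x => f (φ x)
      map_add' := fun x y => by simp
      map_smul' := fun h x => by simp [hf] }
  map_add' φ ψ := by ext x; simp
  map_smul' c φ := by ext x; simp

end Eval

/-- Condition (†) for the category of Yetter-Drinfeld modules: for every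
Yetter-Drinfeld module `X` which is finitely generated as a left `H`-module,
the functor `Hom_H(X, -)` is exact on the category of Yetter-Drinfeld modules. -/
def DaggerYD (Sinv : H →ₗ[k] H) : Prop :=
  ∀ X : YDCat k H Sinv, Module.Finite H X.M →
  ∀ (A B C : YDCat k H Sinv) (f : A.M →ₗ[k] B.M) (g : B.M →ₗ[k] C.M)
    (hf : IsHom k H A.ρ B.ρ f) (hg : IsHom k H B.ρ C.ρ g),
    Function.Injective f → Function.Surjective g →
    LinearMap.range f = LinearMap.ker g →
    Function.Injective (postcompH (X := X.M) f hf.1) ∧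
    LinearMap.range (postcompH (X := X.M) f hf.1) =
      LinearMap.ker (postcompH (X := X.M) g hg.1) ∧
    Function.Surjective (postcompH (X := X.M) g hg.1)

/-- Condition (†) for the category of Long dimodules. -/
def DaggerLong : Prop :=
  ∀ X : LongCat k H, Module.Finite H X.M →
  ∀ (A B C : LongCat k H) (f : A.M →ₗ[k] B.M) (g : B.M →ₗ[k] C.M)
    (hf : IsHom k H A.ρ B.ρ f) (hg : IsHom k H B.ρ C.ρ g),
    Function.Injective f → Function.Surjective g →
    LinearMap.range f = LinearMap.ker g →
    Function.Injective (postcompH (X := X.M) f hf.1) ∧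
    LinearMap.range (postcompH (X := X.M) f hf.1) =
      LinearMap.ker (postcompH (X := X.M) g hg.1) ∧
    Function.Surjective (postcompH (X := X.M) g hg.1)

/-- Projective object in the category of Yetter-Drinfeld modules. -/
def IsProjectiveYD (Sinv : H →ₗ[k] H) (P : YDCat k H Sinv) : Prop :=
  ∀ (A B : YDCat k H Sinv) (g : A.M →ₗ[k] B.M) (f : P.M →ₗ[k] B.M),
    IsHom k H A.ρ B.ρ g → Function.Surjective g → IsHom k H P.ρ B.ρ f →
    ∃ l : P.M →ₗ[k] A.M, IsHom k H P.ρ A.ρ l ∧ g.comp l = f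

/-- Projective object in the category of Long dimodules. -/
def IsProjectiveLong (P : LongCat k H) : Prop :=
  ∀ (A B : LongCat k H) (g : A.M →ₗ[k] B.M) (f : P.M →ₗ[k] B.M),
    IsHom k H A.ρ B.ρ g → Function.Surjective g → IsHom k H P.ρ B.ρ f →
    ∃ l : P.M →ₗ[k] A.M, IsHom k H P.ρ A.ρ l ∧ g.comp l = f

/-- Injective object in the category of Yetter-Drinfeld modules. -/
def IsInjectiveYD (Sinv : H →ₗ[k] H) (I : YDCat k H Sinv) : Prop :=
  ∀ (A B : YDCat k H Sinv) (ι : A.M →ₗ[k] B.M) (f : A.M →ₗ[k] I.M),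
    IsHom k H A.ρ B.ρ ι → Function.Injective ι → IsHom k H A.ρ I.ρ f →
    ∃ g : B.M →ₗ[k] I.M, IsHom k H B.ρ I.ρ g ∧ g.comp ι = f

/-- Projective object in the category of right `H`-comodules. -/
def IsProjectiveComod (P : ComodCat k H) : Prop :=
  ∀ (A B : ComodCat k H) (g : A.V →ₗ[k] B.V) (f : P.V →ₗ[k] B.V),
    IsColin k H A.ρ B.ρ g → Function.Surjective g → IsColin k H P.ρ B.ρ f →
    ∃ l : P.V →ₗ[k] A.V, IsColin k H P.ρ A.ρ l ∧ g.comp l = f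

section HomLemmas

variable {k H}
variable {A B C : Type} [AddCommGroup A] [Module k A] [Module H A]
  [AddCommGroup B] [Module k B] [Module H B]
  [AddCommGroup C] [Module k C] [Module H C]

lemma IsHom.comp' {ρA : A →ₗ[k] A ⊗[k] H} {ρB : B →ₗ[k] B ⊗[k] H} {ρC : C →ₗ[k] C ⊗[k] H}
    {f : A →ₗ[k] B} {g : B →ₗ[k] C}
    (hf : IsHom k H ρA ρB f) (hg : IsHom k H ρB ρC g) :
    IsHom k H ρA ρC (g.comp f) := by
  refine ⟨fun h a => by simp [LinearMap.comp_apply, hf.1, hg.1], ?_⟩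
  calc ρC.comp (g.comp f) = (ρC.comp g).comp f := by rw [LinearMap.comp_assoc]
    _ = ((LinearMap.rTensor H g).comp ρB).comp f := by rw [hg.2]
    _ = (LinearMap.rTensor H g).comp (ρB.comp f) := by rw [LinearMap.comp_assoc]
    _ = (LinearMap.rTensor H g).comp ((LinearMap.rTensor H f).comp ρA) := by rw [hf.2]
    _ = ((LinearMap.rTensor H g).comp (LinearMap.rTensor H f)).comp ρA := by
          rw [LinearMap.comp_assoc]
    _ = (LinearMap.rTensor H (g.comp f)).comp ρA := by rw [LinearMap.rTensor_comp]

end HomLemmas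

section HomYD

variable {k H}
variable (Sinv : H →ₗ[k] H)

/-- The `k`-module of morphisms of Yetter-Drinfeld modules `Hom_H^H(A, B)`, as a
submodule of the `k`-linear maps. -/
def homYD (A B : YDCat k H Sinv) : Submodule k (A.M →ₗ[k] B.M) where
  carrier := {f | IsHom k H A.ρ B.ρ f}
  add_mem' := by
    rintro f g ⟨hf1, hf2⟩ ⟨hg1, hg2⟩
    refine ⟨fun h a => by simp [hf1, hg1, smul_add], ?_⟩
    rw [LinearMap.comp_add, LinearMap.rTensor_add, LinearMap.add_comp, hf2, hg2]
  zero_mem' := by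
    refine ⟨fun h a => by simp, ?_⟩
    rw [LinearMap.comp_zero, LinearMap.rTensor_zero, LinearMap.zero_comp]
  smul_mem' := by
    rintro c f ⟨hf1, hf2⟩
    refine ⟨fun h a => by
      rw [LinearMap.smul_apply, LinearMap.smul_apply, hf1, smul_comm], ?_⟩
    rw [LinearMap.comp_smul, LinearMap.rTensor_smul, LinearMap.smul_comp, hf2]

/-- Post-composition with a morphism of Yetter-Drinfeld modules, as a `k`-linear map
between morphism spaces. -/
def postcompYD {X B C : YDCat k H Sinv}
    (g : B.M →ₗ[k] C.M) (hg : IsHom k H B.ρ C.ρ g) :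
    ↥(homYD Sinv X B) →ₗ[k] ↥(homYD Sinv X C) where
  toFun f := ⟨g.comp f.1, IsHom.comp' f.2 hg⟩
  map_add' f g' := by ext x; simp
  map_smul' c f := by ext x; simp

/-- An injective resolution `0 → X → I⁰ → I¹ → ⋯` in the category of
Yetter-Drinfeld modules. -/
structure IsInjRes (X : YDCat k H Sinv) (I : ℕ → YDCat k H Sinv)
    (ε : X.M →ₗ[k] (I 0).M) (d : ∀ n, (I n).M →ₗ[k] (I (n + 1)).M) : Prop where
  eps_hom : IsHom k H X.ρ (I 0).ρ ε
  d_hom : ∀ n, IsHom k H (I n).ρ (I (n + 1)).ρ (d n)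
  inj : ∀ n, IsInjectiveYD k H Sinv (I n)
  mono : Function.Injective ε
  exact0 : LinearMap.range ε = LinearMap.ker (d 0)
  exact : ∀ n, LinearMap.range (d n) = LinearMap.ker (d (n + 1))

/-- A projective resolution `⋯ → P₁ → P₀ → X → 0` in the category of
Yetter-Drinfeld modules. -/
structure IsProjRes (X : YDCat k H Sinv) (P : ℕ → YDCat k H Sinv)
    (ε : (P 0).M →ₗ[k] X.M) (d : ∀ n, (P (n + 1)).M →ₗ[k] (P n).M) : Prop where
  eps_hom : IsHom k H (P 0).ρ X.ρ ε
  d_hom : ∀ n, IsHom k H (P (n + 1)).ρ (P n).ρ (d n)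
  proj : ∀ n, IsProjectiveYD k H Sinv (P n)
  epi : Function.Surjective ε
  exact0 : LinearMap.range (d 0) = LinearMap.ker ε
  exact : ∀ n, LinearMap.range (d (n + 1)) = LinearMap.ker (d n)

/-- The projective dimension of `X` in the category of Yetter-Drinfeld modules is
at most `n`. -/
def pdimLE (X : YDCat k H Sinv) (n : ℕ) : Prop :=
  ∃ (P : ℕ → YDCat k H Sinv) (ε : (P 0).M →ₗ[k] X.M)
    (d : ∀ m, (P (m + 1)).M →ₗ[k] (P m).M),
    IsProjRes Sinv X P ε d ∧ ∀ i, n < i → Subsingleton (P i).M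

/-- The injective dimension of `X` in the category of Yetter-Drinfeld modules is
at most `n`. -/
def injdimLE (X : YDCat k H Sinv) (n : ℕ) : Prop :=
  ∃ (I : ℕ → YDCat k H Sinv) (ε : X.M →ₗ[k] (I 0).M)
    (d : ∀ m, (I m).M →ₗ[k] (I (m + 1)).M),
    IsInjRes Sinv X I ε d ∧ ∀ i, n < i → Subsingleton (I i).M

/-- The complex `Hom(X, I⁰) → Hom(X, I¹) → ⋯` of morphism spaces induced by a
cochain of Yetter-Drinfeld modules. -/
def homCx (X : YDCat k H Sinv) (I : ℕ → YDCat k H Sinv)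
    (d : ∀ n, (I n).M →ₗ[k] (I (n + 1)).M)
    (hd : ∀ n, IsHom k H (I n).ρ (I (n + 1)).ρ (d n)) (n : ℕ) :
    ↥(homYD Sinv X (I n)) →ₗ[k] ↥(homYD Sinv X (I (n + 1))) :=
  postcompYD Sinv (d n) (hd n)

/-- Coboundaries of the induced complex. -/
def boundaries (X : YDCat k H Sinv) (I : ℕ → YDCat k H Sinv)
    (d : ∀ n, (I n).M →ₗ[k] (I (n + 1)).M)
    (hd : ∀ n, IsHom k H (I n).ρ (I (n + 1)).ρ (d n)) :
    ∀ i, Submodule k ↥(homYD Sinv X (I i))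
  | 0 => ⊥
  | (i + 1) => LinearMap.range (homCx Sinv X I d hd i)

/-- The `i`-th cohomology (cocycles modulo coboundaries) of the complex
`Hom(X, I⁰) → Hom(X, I¹) → ⋯`; when `I` is an injective resolution of `Y`, this is
`Ext^i(X, Y)`, the `i`-th right derived functor of `Hom_H^H(X, -)`, in the category
of Yetter-Drinfeld modules. -/
abbrev cohomology (X : YDCat k H Sinv) (I : ℕ → YDCat k H Sinv)
    (d : ∀ n, (I n).M →ₗ[k] (I (n + 1)).M)
    (hd : ∀ n, IsHom k H (I n).ρ (I (n + 1)).ρ (d n)) (i : ℕ) : Type :=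
  ↥(Submodule.map (boundaries Sinv X I d hd i).mkQ
      (LinearMap.ker (homCx Sinv X I d hd i)))

end HomYD

section CharProps

variable {k H}
variable (Sinv : H →ₗ[k] H)

/-- Characterizing property of the coaction on `Hom_H(A, B)` for Yetter-Drinfeld
modules `A`, `B`: it is determined by `f₀(m) ⊗ f₁ = f(m₀)₀ ⊗ f(m₀)₁ S(m₁)`. -/
def HomCoactChar (A B : YDCat k H Sinv)
    (ρQ : (A.M →ₗ[H] B.M) →ₗ[k] (A.M →ₗ[H] B.M) ⊗[k] H) : Prop :=
  ∀ (f : A.M →ₗ[H] B.M) (m : A.M) (t : Finset ℕ) (m₀ : ℕ → A.M) (m₁ : ℕ → H),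
    (∑ j ∈ t, m₀ j ⊗ₜ[k] m₁ j) = A.ρ m →
    (LinearMap.rTensor H (evalAtH (N := B.M) m)) (ρQ f) =
      ∑ j ∈ t, (LinearMap.lTensor B.M
          (LinearMap.mulRight k (HopfAlgebra.antipode (R := k) (A := H) (m₁ j))))
        (B.ρ (f (m₀ j)))

/-- Characterizing property of the coaction on `Hom_k(V, B)` for a comodule `V` and
a Yetter-Drinfeld module `B`: `g₀(v) ⊗ g₁ = g(v₀)₀ ⊗ g(v₀)₁ S(v₁)`. -/
def HomKCoactChar (V : ComodCat k H) (B : YDCat k H Sinv)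
    (ρ' : (V.V →ₗ[k] B.M) →ₗ[k] (V.V →ₗ[k] B.M) ⊗[k] H) : Prop :=
  ∀ (g : V.V →ₗ[k] B.M) (v : V.V) (t : Finset ℕ) (v₀ : ℕ → V.V) (v₁ : ℕ → H),
    (∑ j ∈ t, v₀ j ⊗ₜ[k] v₁ j) = V.ρ v →
    (LinearMap.rTensor H (evalAtK (N := B.M) v)) (ρ' g) =
      ∑ j ∈ t, (LinearMap.lTensor B.M
          (LinearMap.mulRight k (HopfAlgebra.antipode (R := k) (A := H) (v₁ j))))
        (B.ρ (g (v₀ j)))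

/-- Characterizing property of the Yetter-Drinfeld coaction on `H ⊗ V`:
`ρ(h ⊗ v) = h₂ ⊗ v₀ ⊗ h₃ v₁ S⁻¹(h₁)`. -/
def HTensorYDChar (V : ComodCat k H)
    (ρT : (H ⊗[k] V.V) →ₗ[k] (H ⊗[k] V.V) ⊗[k] H) : Prop :=
  ∀ (h : H) (v : V.V) (s t : Finset ℕ) (a b c : ℕ → H) (v₀ : ℕ → V.V) (v₁ : ℕ → H),
    (∑ i ∈ s, (a i ⊗ₜ[k] b i) ⊗ₜ[k] c i) = Delta2 k H h →
    (∑ j ∈ t, v₀ j ⊗ₜ[k] v₁ j) = V.ρ v →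
    ρT (h ⊗ₜ[k] v) =
      ∑ i ∈ s, ∑ j ∈ t, (b i ⊗ₜ[k] v₀ j) ⊗ₜ[k] (c i * v₁ j * Sinv (a i))

/-- Characterizing property of the Long dimodule coaction on `H ⊗ V`:
`ρ(h ⊗ v) = h ⊗ v₀ ⊗ v₁`. -/
def HTensorLongChar (V : ComodCat k H)
    (ρT : (H ⊗[k] V.V) →ₗ[k] (H ⊗[k] V.V) ⊗[k] H) : Prop :=
  ∀ (h : H) (v : V.V) (t : Finset ℕ) (v₀ : ℕ → V.V) (v₁ : ℕ → H),
    (∑ j ∈ t, v₀ j ⊗ₜ[k] v₁ j) = V.ρ v →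
    ρT (h ⊗ₜ[k] v) = ∑ j ∈ t, (h ⊗ₜ[k] v₀ j) ⊗ₜ[k] v₁ j

end CharProps

end RingPart

section CommPart

variable {k H : Type} [CommRing k] [CommRing H] [HopfAlgebra k H] (Sinv : H →ₗ[k] H)

/-- Characterizing property of the Yetter-Drinfeld coaction on `M ⊗_H N`:
`ρ(m ⊗ n) = m₀ ⊗ n₀ ⊗ n₁ m₁` (for `H` commutative). -/
def TensorCoactChar (A B : YDCat k H Sinv)
    (ρT : (A.M ⊗[H] B.M) →ₗ[k] (A.M ⊗[H] B.M) ⊗[k] H) : Prop :=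
  ∀ (m : A.M) (n : B.M) (s t : Finset ℕ) (m₀ : ℕ → A.M) (m₁ : ℕ → H)
    (n₀ : ℕ → B.M) (n₁ : ℕ → H),
    (∑ i ∈ s, m₀ i ⊗ₜ[k] m₁ i) = A.ρ m →
    (∑ j ∈ t, n₀ j ⊗ₜ[k] n₁ j) = B.ρ n →
    ρT (m ⊗ₜ[H] n) =
      ∑ i ∈ s, ∑ j ∈ t, (m₀ i ⊗ₜ[H] n₀ j) ⊗ₜ[k] (n₁ j * m₁ i)

/-- Restriction along `v ↦ 1 ⊗ v`, i.e. the canonical map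
`Hom_H(H ⊗ V, N) → Hom_k(V, N)`, `f ↦ (v ↦ f(1 ⊗ v))`. -/
def resUnitMap (V : Type) [AddCommGroup V] [Module k V] (N : Type) [AddCommGroup N]
    [Module k N] [Module H N] [IsScalarTower k H N] [SMulCommClass H k N] :
    ((H ⊗[k] V) →ₗ[H] N) →ₗ[k] (V →ₗ[k] N) where
  toFun f := (f.restrictScalars k).comp ((TensorProduct.mk k H V) 1)
  map_add' f g := by ext v; rfl
  map_smul' c f := by ext v; rfl

end CommPart


section Aux

variable {k H : Type} [CommRing k] [CommRing H] [HopfAlgebra k H]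

lemma exists_repr {A B : Type} [AddCommGroup A] [Module k A] [AddCommGroup B] [Module k B]
    (x : A ⊗[k] B) :
    ∃ (t : Finset ℕ) (a : ℕ → A) (b : ℕ → B), (∑ j ∈ t, a j ⊗ₜ[k] b j) = x := by
  classical
  obtain ⟨S, rfl⟩ := TensorProduct.exists_finset x
  refine ⟨Finset.range S.card,
    fun j => if h : j < S.card then ((S.equivFin.symm ⟨j, h⟩ : S) : A × B).1 else 0,
    fun j => if h : j < S.card then ((S.equivFin.symm ⟨j, h⟩ : S) : A × B).2 else 0, ?_⟩
  rw [← Fin.sum_univ_eq_sum_range]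
  have h1 : ∀ j : Fin S.card,
      (if h : (j : ℕ) < S.card then ((S.equivFin.symm ⟨j, h⟩ : S) : A × B).1 else 0) ⊗ₜ[k]
        (if h : (j : ℕ) < S.card then ((S.equivFin.symm ⟨j, h⟩ : S) : A × B).2 else 0)
      = ((S.equivFin.symm j : S) : A × B).1 ⊗ₜ[k] ((S.equivFin.symm j : S) : A × B).2 := by
    intro j
    rw [dif_pos j.2, dif_pos j.2]
  rw [Finset.sum_congr rfl (fun j _ => h1 j)]
  rw [Equiv.sum_comp S.equivFin.symm (fun p : S => ((p : A × B).1 ⊗ₜ[k] (p : A × B).2))]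
  rw [Finset.sum_coe_sort S (fun p => p.1 ⊗ₜ[k] p.2)]

lemma comod_sandwich {V : Type} [AddCommGroup V] [Module k V]
    (ρ : V →ₗ[k] V ⊗[k] H) (hc : IsComod k H ρ)
    (φ : H ⊗[k] H →ₗ[k] H)
    (hφ : φ ∘ₗ (Coalgebra.comul (R := k) (A := H))
      = (Algebra.linearMap k H) ∘ₗ (Coalgebra.counit (R := k) (A := H)))
    (v : V) (t : Finset ℕ) (v₀ : ℕ → V) (v₁ : ℕ → H)
    (ht : (∑ j ∈ t, v₀ j ⊗ₜ[k] v₁ j) = ρ v)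
    (t' : ℕ → Finset ℕ) (w₀ : ℕ → ℕ → V) (w₁ : ℕ → ℕ → H)
    (hw : ∀ j, (∑ l ∈ t' j, w₀ j l ⊗ₜ[k] w₁ j l) = ρ (v₀ j)) :
    (∑ j ∈ t, ∑ l ∈ t' j, w₀ j l ⊗ₜ[k] φ (w₁ j l ⊗ₜ[k] v₁ j)) = v ⊗ₜ[k] (1 : H) := by
  have h3 : (TensorProduct.assoc k V H H) ((LinearMap.rTensor H ρ) (ρ v)) =
      ∑ j ∈ t, ∑ l ∈ t' j, w₀ j l ⊗ₜ[k] (w₁ j l ⊗ₜ[k] v₁ j) := by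
    rw [← ht, map_sum, map_sum]
    refine Finset.sum_congr rfl fun j _ => ?_
    rw [LinearMap.rTensor_tmul, ← hw j, TensorProduct.sum_tmul, map_sum]
    exact Finset.sum_congr rfl fun l _ => by rw [TensorProduct.assoc_tmul]
  have h5 : LinearMap.lTensor V (Coalgebra.counit (R := k) (A := H)) (ρ v)
      = v ⊗ₜ[k] (1 : k) := by
    have h6 := hc.1 v
    have h7 := congrArg (TensorProduct.rid k V).symm h6
    rw [LinearEquiv.symm_apply_apply] at h7
    rw [h7, TensorProduct.rid_symm_apply]
  calc ∑ j ∈ t, ∑ l ∈ t' j, w₀ j l ⊗ₜ[k] φ (w₁ j l ⊗ₜ[k] v₁ j)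
      = LinearMap.lTensor V φ
          (∑ j ∈ t, ∑ l ∈ t' j, w₀ j l ⊗ₜ[k] (w₁ j l ⊗ₜ[k] v₁ j)) := by
        rw [map_sum]
        exact Finset.sum_congr rfl fun j _ => by
          rw [map_sum]
          exact Finset.sum_congr rfl fun l _ => by rw [LinearMap.lTensor_tmul]
    _ = LinearMap.lTensor V φ
          ((LinearMap.lTensor V (Coalgebra.comul (R := k) (A := H))) (ρ v)) := by
        rw [← h3, hc.2 v]
    _ = LinearMap.lTensor V (φ ∘ₗ (Coalgebra.comul (R := k) (A := H))) (ρ v) := by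
        rw [LinearMap.lTensor_comp, LinearMap.comp_apply]
    _ = LinearMap.lTensor V
          ((Algebra.linearMap k H) ∘ₗ (Coalgebra.counit (R := k) (A := H))) (ρ v) := by
        rw [hφ]
    _ = LinearMap.lTensor V (Algebra.linearMap k H)
          (LinearMap.lTensor V (Coalgebra.counit (R := k) (A := H)) (ρ v)) := by
        rw [LinearMap.lTensor_comp, LinearMap.comp_apply]
    _ = v ⊗ₜ[k] (1 : H) := by
        rw [h5, LinearMap.lTensor_tmul, Algebra.linearMap_apply, map_one]

/-- The map `x ⊗ h ↦ χ(x) · (1 ⊗ h)`. -/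
def twist {V P : Type} [AddCommGroup V] [Module k V] [AddCommGroup P] [Module k P]
    (χ : V →ₗ[k] P ⊗[k] H) : V ⊗[k] H →ₗ[k] P ⊗[k] H :=
  (LinearMap.lTensor P (LinearMap.mul' k H)) ∘ₗ
    (TensorProduct.assoc k P H H).toLinearMap ∘ₗ (LinearMap.rTensor H χ)

lemma twist_tmul {V P : Type} [AddCommGroup V] [Module k V] [AddCommGroup P] [Module k P]
    (χ : V →ₗ[k] P ⊗[k] H) (x : V) (h : H) :
    twist χ (x ⊗ₜ[k] h) = LinearMap.lTensor P (LinearMap.mulRight k h) (χ x) := by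
  obtain ⟨u, p, a, hpa⟩ := exists_repr (χ x)
  simp only [twist, LinearMap.comp_apply, LinearEquiv.coe_coe, LinearMap.rTensor_tmul]
  rw [← hpa, TensorProduct.sum_tmul, map_sum, map_sum, map_sum]
  exact Finset.sum_congr rfl fun i _ => by
    rw [TensorProduct.assoc_tmul, LinearMap.lTensor_tmul, LinearMap.lTensor_tmul,
      LinearMap.mul'_apply, LinearMap.mulRight_apply]

lemma eval_inj {NN PP : Type} [AddCommGroup NN] [Module k NN] [Module H NN]
    [IsScalarTower k H NN] [SMulCommClass H k NN]
    [AddCommGroup PP] [Module k PP] [Module H PP] [IsScalarTower k H PP]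
    [SMulCommClass H k PP]
    (hfin : Module.Finite H NN) (hproj : Module.Projective H NN)
    (x y : (NN →ₗ[H] PP) ⊗[k] H)
    (hxy : ∀ n : NN, LinearMap.rTensor H (evalAtH (k := k) (N := PP) n) x
      = LinearMap.rTensor H (evalAtH (k := k) (N := PP) n) y) : x = y := by
  classical
  obtain ⟨r, π, hπ⟩ := Module.Finite.exists_fin' H NN
  obtain ⟨σ, hσ⟩ := Module.projective_lifting_property π (LinearMap.id) hπ
  let e : Fin r → (Fin r → H) := fun i j => if i = j then 1 else 0
  let μ : Fin r → (PP →ₗ[k] (NN →ₗ[H] PP)) := fun i =>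
    { toFun := fun p =>
        { toFun := fun n => σ n i • p
          map_add' := fun n n' => by
            show σ (n + n') i • p = σ n i • p + σ n' i • p
            rw [map_add, Pi.add_apply, add_smul]
          map_smul' := fun h n => by
            show σ (h • n) i • p = (RingHom.id H) h • (σ n i • p)
            rw [map_smul, RingHom.id_apply, Pi.smul_apply, smul_eq_mul, mul_smul] }
      map_add' := fun p p' => by
        ext n
        show σ n i • (p + p') = σ n i • p + σ n i • p'
        rw [smul_add]
      map_smul' := fun c p => by
        ext n
        show σ n i • (c • p) = c • (σ n i • p)
        rw [smul_comm] }
  have key : ∀ z : (NN →ₗ[H] PP) ⊗[k] H,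
      z = ∑ i, LinearMap.rTensor H (μ i)
        (LinearMap.rTensor H (evalAtH (k := k) (N := PP) (π (e i))) z) := by
    have hid : (LinearMap.id : (NN →ₗ[H] PP) ⊗[k] H →ₗ[k] (NN →ₗ[H] PP) ⊗[k] H) =
        ∑ i, (LinearMap.rTensor H (μ i)) ∘ₗ
          (LinearMap.rTensor H (evalAtH (k := k) (N := PP) (π (e i)))) := by
      apply TensorProduct.ext'
      intro q h
      simp only [LinearMap.id_apply, LinearMap.sum_apply, LinearMap.comp_apply,
        LinearMap.rTensor_tmul]
      rw [← TensorProduct.sum_tmul]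
      congr 1
      ext n
      have h1 : π (σ n) = n := by
        have := LinearMap.congr_fun hσ n
        simpa using this
      have h2 := LinearMap.pi_apply_eq_sum_univ (q ∘ₗ π) (σ n)
      simp only [LinearMap.comp_apply] at h2
      rw [h1] at h2
      rw [LinearMap.sum_apply]
      rw [h2]
      rfl
    intro z
    conv_lhs => rw [← LinearMap.id_apply (R := k) z, hid]
    rw [LinearMap.sum_apply]
    exact Finset.sum_congr rfl fun i _ => rfl
  rw [key x, key y]
  exact Finset.sum_congr rfl fun i _ => by rw [hxy]

variable {Sinv : H →ₗ[k] H}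

/-- Uncurrying `Hom(M, Hom_H(N, P)) → Hom(M ⊗_H N, P)`. -/
def uncurryYD (M N P : YDCat k H Sinv) (f : M.M →ₗ[k] (N.M →ₗ[H] P.M))
    (hf : ∀ (h : H) (m : M.M), f (h • m) = h • f m) :
    (M.M ⊗[H] N.M) →ₗ[k] P.M :=
  (TensorProduct.lift
    ({ toFun := f, map_add' := map_add f, map_smul' := hf } :
      M.M →ₗ[H] (N.M →ₗ[H] P.M))).restrictScalars k

lemma uncurryYD_tmul (M N P : YDCat k H Sinv) (f : M.M →ₗ[k] (N.M →ₗ[H] P.M))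
    (hf : ∀ (h : H) (m : M.M), f (h • m) = h • f m) (m : M.M) (n : N.M) :
    uncurryYD M N P f hf (m ⊗ₜ[H] n) = f m n := rfl

/-- Currying `Hom(M ⊗_H N, P) → Hom(M, Hom_H(N, P))`. -/
def curryYD (M N P : YDCat k H Sinv) (g : (M.M ⊗[H] N.M) →ₗ[k] P.M)
    (hg : ∀ (h : H) (x : M.M ⊗[H] N.M), g (h • x) = h • g x) :
    M.M →ₗ[k] (N.M →ₗ[H] P.M) where
  toFun m :=
    { toFun := fun n => g (m ⊗ₜ[H] n)
      map_add' := fun n n' => by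
        show g (m ⊗ₜ[H] (n + n')) = g (m ⊗ₜ[H] n) + g (m ⊗ₜ[H] n')
        rw [TensorProduct.tmul_add, map_add]
      map_smul' := fun h n => by
        show g (m ⊗ₜ[H] (h • n)) = (RingHom.id H) h • g (m ⊗ₜ[H] n)
        rw [TensorProduct.tmul_smul, hg, RingHom.id_apply] }
  map_add' m m' := by
    ext n
    simp only [LinearMap.coe_mk, AddHom.coe_mk, LinearMap.add_apply]
    rw [TensorProduct.add_tmul, map_add]
  map_smul' c m := by
    ext n
    simp only [LinearMap.coe_mk, AddHom.coe_mk, RingHom.id_apply, LinearMap.smul_apply]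
    rw [← TensorProduct.smul_tmul', map_smul]

lemma curryYD_apply (M N P : YDCat k H Sinv) (g : (M.M ⊗[H] N.M) →ₗ[k] P.M)
    (hg : ∀ (h : H) (x : M.M ⊗[H] N.M), g (h • x) = h • g x) (m : M.M) (n : N.M) :
    curryYD M N P g hg m n = g (m ⊗ₜ[H] n) := rfl

lemma tensor_map_ext {A B W : Type} [AddCommGroup A] [Module k A] [Module H A]
    [IsScalarTower k H A] [SMulCommClass H k A]
    [AddCommGroup B] [Module k B] [Module H B] [IsScalarTower k H B] [SMulCommClass H k B]
    [AddCommGroup W] [Module k W]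
    {g h : (A ⊗[H] B) →ₗ[k] W}
    (H1 : ∀ (m : A) (n : B), g (m ⊗ₜ[H] n) = h (m ⊗ₜ[H] n)) : g = h := by
  apply LinearMap.ext
  intro x
  induction x using TensorProduct.induction_on with
  | zero => simp
  | tmul m n => exact H1 m n
  | add a b ha hb => rw [map_add, map_add, ha, hb]

lemma forward_hom (M N P : YDCat k H Sinv)
    (ρQ : (N.M →ₗ[H] P.M) →ₗ[k] (N.M →ₗ[H] P.M) ⊗[k] H)
    (hQchar : HomCoactChar Sinv N P ρQ)
    (ρT : (M.M ⊗[H] N.M) →ₗ[k] (M.M ⊗[H] N.M) ⊗[k] H)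
    (hTchar : TensorCoactChar Sinv M N ρT)
    (f : M.M →ₗ[k] (N.M →ₗ[H] P.M)) (hf : IsHom k H M.ρ ρQ f) :
    IsHom k H ρT P.ρ (uncurryYD M N P f hf.1) := by
  constructor
  · intro h x
    exact (TensorProduct.lift _).map_smul h x
  · apply LinearMap.ext
    intro x
    simp only [LinearMap.comp_apply]
    induction x using TensorProduct.induction_on with
    | zero => simp
    | add a b ha hb => simp only [map_add, ha, hb]
    | tmul m n =>
      classical
      obtain ⟨s, m₀, m₁, hm⟩ := exists_repr (M.ρ m)
      obtain ⟨t, n₀, n₁, hn⟩ := exists_repr (N.ρ n)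
      choose t' w₀ w₁ hw using fun j => exists_repr (N.ρ (n₀ j))
      have hρQ : ρQ (f m) = ∑ i ∈ s, f (m₀ i) ⊗ₜ[k] m₁ i := by
        have h0 := LinearMap.congr_fun hf.2 m
        simp only [LinearMap.comp_apply] at h0
        rw [h0, ← hm, map_sum]
        exact Finset.sum_congr rfl fun i _ => by rw [LinearMap.rTensor_tmul]
      have Eqj : ∀ j, (∑ i ∈ s, (f (m₀ i)) (n₀ j) ⊗ₜ[k] m₁ i) =
          ∑ l ∈ t' j, (LinearMap.lTensor P.M (LinearMap.mulRight k
              (HopfAlgebra.antipode (R := k) (A := H) (w₁ j l))))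
            (P.ρ ((f m) (w₀ j l))) := by
        intro j
        have h1 := hQchar (f m) (n₀ j) (t' j) (w₀ j) (w₁ j) (hw j)
        rw [hρQ, map_sum] at h1
        simp only [LinearMap.rTensor_tmul] at h1
        rw [← h1]
        exact Finset.sum_congr rfl fun i _ => rfl
      set χ : N.M →ₗ[k] P.M ⊗[k] H := P.ρ ∘ₗ ((f m).restrictScalars k) with hχ
      have hχa : ∀ x : N.M, χ x = P.ρ ((f m) x) := fun x => rfl
      have hφA : ((LinearMap.mul' k H) ∘ₗ
          (LinearMap.rTensor H (HopfAlgebra.antipode (R := k) (A := H)))) ∘ₗ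
            (Coalgebra.comul (R := k) (A := H))
          = (Algebra.linearMap k H) ∘ₗ (Coalgebra.counit (R := k) (A := H)) := by
        rw [LinearMap.comp_assoc]
        exact HopfAlgebra.mul_antipode_rTensor_comul
      have hφAapp : ∀ a b : H, ((LinearMap.mul' k H) ∘ₗ
          (LinearMap.rTensor H (HopfAlgebra.antipode (R := k) (A := H)))) (a ⊗ₜ[k] b)
          = HopfAlgebra.antipode (R := k) (A := H) a * b := fun a b => by
        rw [LinearMap.comp_apply, LinearMap.rTensor_tmul, LinearMap.mul'_apply]
      have hsand := comod_sandwich N.ρ N.comod _ hφA n t n₀ n₁ hn t' w₀ w₁ hw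
      rw [hTchar m n s t m₀ m₁ n₀ n₁ hm hn, map_sum]
      have hRHS : ∀ i, LinearMap.rTensor H (uncurryYD M N P f hf.1)
            (∑ j ∈ t, (m₀ i ⊗ₜ[H] n₀ j) ⊗ₜ[k] (n₁ j * m₁ i))
          = ∑ j ∈ t, (f (m₀ i)) (n₀ j) ⊗ₜ[k] (n₁ j * m₁ i) := by
        intro i
        rw [map_sum]
        exact Finset.sum_congr rfl fun j _ => by
          rw [LinearMap.rTensor_tmul, uncurryYD_tmul]
      rw [Finset.sum_congr rfl fun i _ => hRHS i]
      calc P.ρ (uncurryYD M N P f hf.1 (m ⊗ₜ[H] n))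
          = LinearMap.lTensor P.M (LinearMap.mulRight k (1 : H)) (χ n) := by
            rw [LinearMap.mulRight_one, LinearMap.lTensor_id, LinearMap.id_apply,
              hχa, uncurryYD_tmul]
        _ = twist χ (n ⊗ₜ[k] (1 : H)) := (twist_tmul χ n 1).symm
        _ = twist χ (∑ j ∈ t, ∑ l ∈ t' j, w₀ j l ⊗ₜ[k]
              (((LinearMap.mul' k H) ∘ₗ
                (LinearMap.rTensor H (HopfAlgebra.antipode (R := k) (A := H))))
                  (w₁ j l ⊗ₜ[k] n₁ j))) := by rw [hsand]
        _ = ∑ j ∈ t, ∑ l ∈ t' j, LinearMap.lTensor P.M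
              (LinearMap.mulRight k
                (HopfAlgebra.antipode (R := k) (A := H) (w₁ j l) * n₁ j))
              (χ (w₀ j l)) := by
            rw [map_sum]
            refine Finset.sum_congr rfl fun j _ => ?_
            rw [map_sum]
            refine Finset.sum_congr rfl fun l _ => ?_
            rw [hφAapp, twist_tmul]
        _ = ∑ j ∈ t, LinearMap.lTensor P.M (LinearMap.mulRight k (n₁ j))
              (∑ l ∈ t' j, LinearMap.lTensor P.M
                (LinearMap.mulRight k
                  (HopfAlgebra.antipode (R := k) (A := H) (w₁ j l)))
                (χ (w₀ j l))) := by
            refine Finset.sum_congr rfl fun j _ => ?_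
            rw [map_sum]
            refine Finset.sum_congr rfl fun l _ => ?_
            rw [LinearMap.mulRight_mul, LinearMap.lTensor_comp, LinearMap.comp_apply]
        _ = ∑ j ∈ t, LinearMap.lTensor P.M (LinearMap.mulRight k (n₁ j))
              (∑ i ∈ s, (f (m₀ i)) (n₀ j) ⊗ₜ[k] m₁ i) := by
            refine Finset.sum_congr rfl fun j _ => ?_
            rw [Eqj j]
            congr 1
        _ = ∑ j ∈ t, ∑ i ∈ s, (f (m₀ i)) (n₀ j) ⊗ₜ[k] (m₁ i * n₁ j) := by
            refine Finset.sum_congr rfl fun j _ => ?_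
            rw [map_sum]
            exact Finset.sum_congr rfl fun i _ => by
              rw [LinearMap.lTensor_tmul, LinearMap.mulRight_apply]
        _ = ∑ i ∈ s, ∑ j ∈ t, (f (m₀ i)) (n₀ j) ⊗ₜ[k] (n₁ j * m₁ i) := by
            rw [Finset.sum_comm]
            exact Finset.sum_congr rfl fun i _ =>
              Finset.sum_congr rfl fun j _ => by rw [mul_comm]

lemma backward_hom (M N P : YDCat k H Sinv)
    (ρQ : (N.M →ₗ[H] P.M) →ₗ[k] (N.M →ₗ[H] P.M) ⊗[k] H)
    (hQchar : HomCoactChar Sinv N P ρQ)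
    (ρT : (M.M ⊗[H] N.M) →ₗ[k] (M.M ⊗[H] N.M) ⊗[k] H)
    (hTchar : TensorCoactChar Sinv M N ρT)
    (hNfin : Module.Finite H N.M) (hNproj : Module.Projective H N.M)
    (g : (M.M ⊗[H] N.M) →ₗ[k] P.M) (hg : IsHom k H ρT P.ρ g) :
    IsHom k H M.ρ ρQ (curryYD M N P g hg.1) := by
  constructor
  · intro h m
    ext n
    show g ((h • m) ⊗ₜ[H] n) = h • (g (m ⊗ₜ[H] n))
    rw [← TensorProduct.smul_tmul', hg.1]
  · apply LinearMap.ext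
    intro m
    simp only [LinearMap.comp_apply]
    apply eval_inj hNfin hNproj
    intro n
    classical
    obtain ⟨s, m₀, m₁, hm⟩ := exists_repr (M.ρ m)
    obtain ⟨t, n₀, n₁, hn⟩ := exists_repr (N.ρ n)
    choose t' w₀ w₁ hw using fun j => exists_repr (N.ρ (n₀ j))
    set cg := curryYD M N P g hg.1 with hcg
    set χ : N.M →ₗ[k] P.M ⊗[k] H :=
      { toFun := fun x => ∑ i ∈ s, g (m₀ i ⊗ₜ[H] x) ⊗ₜ[k] m₁ i
        map_add' := fun x y => by
          rw [← Finset.sum_add_distrib]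
          exact Finset.sum_congr rfl fun i _ => by
            rw [TensorProduct.tmul_add, map_add, TensorProduct.add_tmul]
        map_smul' := fun c x => by
          rw [RingHom.id_apply, Finset.smul_sum]
          exact Finset.sum_congr rfl fun i _ => by
            rw [TensorProduct.tmul_smul, map_smul, TensorProduct.smul_tmul'] } with hχ
    have hχa : ∀ x : N.M, χ x = ∑ i ∈ s, g (m₀ i ⊗ₜ[H] x) ⊗ₜ[k] m₁ i := fun x => rfl
    have hφB : ((LinearMap.mul' k H) ∘ₗ
        (LinearMap.lTensor H (HopfAlgebra.antipode (R := k) (A := H)))) ∘ₗ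
          (Coalgebra.comul (R := k) (A := H))
        = (Algebra.linearMap k H) ∘ₗ (Coalgebra.counit (R := k) (A := H)) := by
      rw [LinearMap.comp_assoc]
      exact HopfAlgebra.mul_antipode_lTensor_comul
    have hφBapp : ∀ a b : H, ((LinearMap.mul' k H) ∘ₗ
        (LinearMap.lTensor H (HopfAlgebra.antipode (R := k) (A := H)))) (a ⊗ₜ[k] b)
        = a * HopfAlgebra.antipode (R := k) (A := H) b := fun a b => by
      rw [LinearMap.comp_apply, LinearMap.lTensor_tmul, LinearMap.mul'_apply]
    have hsand := comod_sandwich N.ρ N.comod _ hφB n t n₀ n₁ hn t' w₀ w₁ hw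
    have hstep : ∀ j, P.ρ (cg m (n₀ j)) =
        ∑ i ∈ s, ∑ l ∈ t' j, g (m₀ i ⊗ₜ[H] w₀ j l) ⊗ₜ[k] (w₁ j l * m₁ i) := by
      intro j
      have h0 : cg m (n₀ j) = g (m ⊗ₜ[H] n₀ j) := rfl
      have hg2 := LinearMap.congr_fun hg.2 (m ⊗ₜ[H] n₀ j)
      simp only [LinearMap.comp_apply] at hg2
      rw [h0, hg2]
      rw [hTchar m (n₀ j) s (t' j) m₀ m₁ (w₀ j) (w₁ j) hm (hw j), map_sum]
      refine Finset.sum_congr rfl fun i _ => ?_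
      rw [map_sum]
      exact Finset.sum_congr rfl fun l _ => by rw [LinearMap.rTensor_tmul]
    calc LinearMap.rTensor H (evalAtH (k := k) (N := P.M) n) (ρQ (cg m))
        = ∑ j ∈ t, (LinearMap.lTensor P.M (LinearMap.mulRight k
            (HopfAlgebra.antipode (R := k) (A := H) (n₁ j)))) (P.ρ (cg m (n₀ j))) :=
          hQchar (cg m) n t n₀ n₁ hn
      _ = ∑ j ∈ t, ∑ i ∈ s, ∑ l ∈ t' j, g (m₀ i ⊗ₜ[H] w₀ j l) ⊗ₜ[k]
            (m₁ i * (w₁ j l * HopfAlgebra.antipode (R := k) (A := H) (n₁ j))) := by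
          refine Finset.sum_congr rfl fun j _ => ?_
          rw [hstep j, map_sum]
          refine Finset.sum_congr rfl fun i _ => ?_
          rw [map_sum]
          refine Finset.sum_congr rfl fun l _ => ?_
          rw [LinearMap.lTensor_tmul, LinearMap.mulRight_apply]
          congr 1
          ring
      _ = ∑ j ∈ t, ∑ l ∈ t' j, twist χ (w₀ j l ⊗ₜ[k]
            (w₁ j l * HopfAlgebra.antipode (R := k) (A := H) (n₁ j))) := by
          refine Finset.sum_congr rfl fun j _ => ?_
          rw [Finset.sum_comm]
          refine Finset.sum_congr rfl fun l _ => ?_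
          rw [twist_tmul, hχa, map_sum]
          exact Finset.sum_congr rfl fun i _ => by
            rw [LinearMap.lTensor_tmul, LinearMap.mulRight_apply]
      _ = twist χ (∑ j ∈ t, ∑ l ∈ t' j, w₀ j l ⊗ₜ[k]
            (((LinearMap.mul' k H) ∘ₗ
              (LinearMap.lTensor H (HopfAlgebra.antipode (R := k) (A := H))))
                (w₁ j l ⊗ₜ[k] n₁ j))) := by
          rw [map_sum]
          refine Finset.sum_congr rfl fun j _ => ?_
          rw [map_sum]
          refine Finset.sum_congr rfl fun l _ => ?_
          rw [hφBapp]
      _ = twist χ (n ⊗ₜ[k] (1 : H)) := by rw [hsand]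
      _ = ∑ i ∈ s, g (m₀ i ⊗ₜ[H] n) ⊗ₜ[k] m₁ i := by
          rw [twist_tmul, hχa, map_sum]
          exact Finset.sum_congr rfl fun i _ => by
            rw [LinearMap.lTensor_tmul, LinearMap.mulRight_apply, mul_one]
      _ = LinearMap.rTensor H (evalAtH (k := k) (N := P.M) n)
            (LinearMap.rTensor H cg (M.ρ m)) := by
          rw [← hm, map_sum, map_sum]
          exact Finset.sum_congr rfl fun i _ => by
            rw [LinearMap.rTensor_tmul, LinearMap.rTensor_tmul]
            rfl

end Aux

/-- Lemma 2.1(1). Let `H` be a commutative Hopf algebra with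
bijective antipode over a commutative ring `k`, faithfully flat over `k`, and let
`M`, `N`, `P` be Yetter-Drinfeld modules with `N` finitely generated projective as a
left `H`-module. Then `Hom_H^H(M, Hom_H(N, P)) ≅ Hom_H^H(M ⊗_H N, P)` as
`k`-modules (where `Hom_H(N, P)` and `M ⊗_H N` carry their canonical
Yetter-Drinfeld structures, characterized by the hypotheses below). -/
theorem homYD_tensor_adjunction
    (k H : Type) [CommRing k] [CommRing H] [HopfAlgebra k H]
    [Module.FaithfullyFlat k H]
    (Sinv : H →ₗ[k] H)
    (hS1 : ∀ h : H, Sinv (HopfAlgebra.antipode (R := k) (A := H) h) = h)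
    (hS2 : ∀ h : H, HopfAlgebra.antipode (R := k) (A := H) (Sinv h) = h)
    (M N P : YDCat k H Sinv)
    (hNfin : Module.Finite H N.M) (hNproj : Module.Projective H N.M)
    (ρQ : (N.M →ₗ[H] P.M) →ₗ[k] (N.M →ₗ[H] P.M) ⊗[k] H)
    (hQc : IsComod k H ρQ) (hQyd : IsYDCompat k H Sinv ρQ)
    (hQchar : HomCoactChar Sinv N P ρQ)
    (ρT : (M.M ⊗[H] N.M) →ₗ[k] (M.M ⊗[H] N.M) ⊗[k] H)
    (hTc : IsComod k H ρT) (hTyd : IsYDCompat k H Sinv ρT)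
    (hTchar : TensorCoactChar Sinv M N ρT) :
    Nonempty
      (↥(homYD Sinv M (YDCat.mk (M := N.M →ₗ[H] P.M) ρQ hQc hQyd)) ≃ₗ[k]
        ↥(homYD Sinv (YDCat.mk (M := M.M ⊗[H] N.M) ρT hTc hTyd) P)) := by
  classical
  have hQchar' : HomCoactChar Sinv N P ρQ := hQchar
  refine ⟨LinearEquiv.ofLinear
    { toFun := fun f => ⟨uncurryYD M N P f.1 f.2.1,
        forward_hom M N P ρQ hQchar ρT hTchar f.1 f.2⟩
      map_add' := ?_
      map_smul' := ?_ }
    { toFun := fun g => ⟨curryYD M N P g.1 g.2.1,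
        backward_hom M N P ρQ hQchar ρT hTchar hNfin hNproj g.1 g.2⟩
      map_add' := ?_
      map_smul' := ?_ } ?_ ?_⟩
  · intro f f'
    apply Subtype.ext
    apply tensor_map_ext
    intro m n
    simp only [Submodule.coe_add, LinearMap.add_apply, uncurryYD_tmul]
  · intro c f
    apply Subtype.ext
    apply tensor_map_ext
    intro m n
    simp only [Submodule.coe_smul, LinearMap.smul_apply, uncurryYD_tmul,
      RingHom.id_apply, SetLike.val_smul]
  · intro g g'
    apply Subtype.ext
    apply LinearMap.ext; intro m
    apply LinearMap.ext; intro n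
    simp only [Submodule.coe_add, LinearMap.add_apply, curryYD_apply]
  · intro c g
    apply Subtype.ext
    apply LinearMap.ext; intro m
    apply LinearMap.ext; intro n
    simp only [Submodule.coe_smul, LinearMap.smul_apply, curryYD_apply,
      RingHom.id_apply, SetLike.val_smul]
  · apply LinearMap.ext
    intro g
    apply Subtype.ext
    apply tensor_map_ext
    intro m n
    simp only [LinearMap.comp_apply, LinearMap.coe_mk, AddHom.coe_mk,
      LinearMap.id_apply]
    rw [uncurryYD_tmul]
    rfl
  · apply LinearMap.ext
    intro f
    apply Subtype.ext
    apply LinearMap.ext; intro m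
    apply LinearMap.ext; intro n
    simp only [LinearMap.comp_apply, LinearMap.coe_mk, AddHom.coe_mk,
      LinearMap.id_apply]
    rw [curryYD_apply, uncurryYD_tmul]

end YDPaper
end
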